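/- arXiv:1808.02686 — 2 statements merged into one kernel-verified Lean document; each statement's English description precedes it below -/
import Mathlib

section
/- Let T = △pqu be a triangle, let L* be a line crossing both segment uw and segment uq, where w is a point such that the segment L* ∩ △uwq lies outside the interior of a convex set μ containing u. Then every point of μ that lies in the triangle △uwq lies in the triangle with vertices u, a, b, where a = L* ∩ uw and b = L* ∩ uq. -/
open scoped Classical

/-- consequence of Claim 1 in the proof of Proposition
`Prop:GoodEdge`. The line `L*` crosses the segments `uw` and `uq` at points
`a` and `b`, and the convex set `μ` contains `u` but is disjoint from the
segment `ab = L* ∩ △uwq`.  Then every point of `μ` lying in the closed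
triangle `△uwq` lies in the closed triangle `△uab`. -/
theorem stmt13
    (u w q a b : ℝ × ℝ)
    (A B C : ℝ) (hAB : (A, B) ≠ (0, 0))
    (Lstar : Set (ℝ × ℝ)) (hL : Lstar = {x : ℝ × ℝ | A * x.1 + B * x.2 = C})
    (ha : a ∈ segment ℝ u w ∩ Lstar)
    (hb : b ∈ segment ℝ u q ∩ Lstar)
    (hseg : Lstar ∩ convexHull ℝ ({u, w, q} : Set (ℝ × ℝ)) = segment ℝ a b)
    (μ : Set (ℝ × ℝ)) (hμ : Convex ℝ μ) (hu : u ∈ μ)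
    (hdisj : Disjoint μ (segment ℝ a b)) :
    ∀ x ∈ μ, x ∈ convexHull ℝ ({u, w, q} : Set (ℝ × ℝ)) →
      x ∈ convexHull ℝ ({u, a, b} : Set (ℝ × ℝ)) := by
  intro x hxμ hxhull
  -- points of μ in the triangle never lie on the line
  have hnot : ∀ y ∈ μ, y ∈ convexHull ℝ ({u, w, q} : Set (ℝ × ℝ)) →
      A * y.1 + B * y.2 ≠ C := by
    intro y hyμ hyh hy
    have hyab : y ∈ segment ℝ a b := by
      rw [← hseg]; exact ⟨by rw [hL]; exact hy, hyh⟩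
    exact Set.disjoint_left.mp hdisj hyμ hyab
  have hu_hull : u ∈ convexHull ℝ ({u, w, q} : Set (ℝ × ℝ)) :=
    subset_convexHull ℝ _ (by simp)
  have hfu : A * u.1 + B * u.2 ≠ C := hnot u hu hu_hull
  have hfx : A * x.1 + B * x.2 ≠ C := hnot x hxμ hxhull
  -- x and u are strictly on the same side of the line
  have hsame : 0 < (A * x.1 + B * x.2 - C) * (A * u.1 + B * u.2 - C) := by
    by_contra hcon
    push_neg at hcon
    have hfu' : A * u.1 + B * u.2 - C ≠ 0 := sub_ne_zero.mpr hfu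
    have hfx' : A * x.1 + B * x.2 - C ≠ 0 := sub_ne_zero.mpr hfx
    have hne : (A * x.1 + B * x.2) - (A * u.1 + B * u.2) ≠ 0 := by
      rcases lt_or_gt_of_ne hfu' with h | h <;> rcases lt_or_gt_of_ne hfx' with h' | h' <;>
        nlinarith
    set θ : ℝ := (C - (A * u.1 + B * u.2)) / ((A * x.1 + B * x.2) - (A * u.1 + B * u.2))
      with hθdef
    have hkey : θ * ((A * x.1 + B * x.2) - (A * u.1 + B * u.2))
        = C - (A * u.1 + B * u.2) := div_mul_cancel₀ _ hne
    have hθ0 : 0 ≤ θ := by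
      rcases lt_or_gt_of_ne hfu' with h | h <;> rcases lt_or_gt_of_ne hfx' with h' | h' <;>
        nlinarith [hkey]
    have hθ1 : θ ≤ 1 := by
      rcases lt_or_gt_of_ne hfu' with h | h <;> rcases lt_or_gt_of_ne hfx' with h' | h' <;>
        nlinarith [hkey]
    have hyseg : u + θ • (x - u) ∈ segment ℝ u x := by
      rw [segment_eq_image']
      exact ⟨θ, ⟨hθ0, hθ1⟩, rfl⟩
    have hyμ : u + θ • (x - u) ∈ μ := hμ.segment_subset hu hxμ hyseg
    have hyh : u + θ • (x - u) ∈ convexHull ℝ ({u, w, q} : Set (ℝ × ℝ)) :=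
      (convex_convexHull ℝ _).segment_subset hu_hull hxhull hyseg
    apply hnot _ hyμ hyh
    have h1 : (u + θ • (x - u)).1 = u.1 + θ * (x.1 - u.1) := rfl
    have h2 : (u + θ • (x - u)).2 = u.2 + θ * (x.2 - u.2) := rfl
    rw [h1, h2]
    linear_combination hkey
  -- decompose a and b
  obtain ⟨s1, s, hs1, hs, hsum_s, haeq⟩ := ha.1
  obtain ⟨t1, t, ht1, ht, hsum_t, hbeq⟩ := hb.1
  have hfa : A * a.1 + B * a.2 = C := by have := ha.2; rw [hL] at this; exact this
  have hfb : A * b.1 + B * b.2 = C := by have := hb.2; rw [hL] at this; exact this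
  obtain rfl : s1 = 1 - s := by linarith
  obtain rfl : t1 = 1 - t := by linarith
  have hs0 : 0 < s := by
    rcases hs.lt_or_eq with h | h
    · exact h
    · exfalso
      apply hfu
      have : a = u := by rw [← haeq, ← h]; simp
      rw [← this]; exact hfa
  have ht0 : 0 < t := by
    rcases ht.lt_or_eq with h | h
    · exact h
    · exfalso
      apply hfu
      have : b = u := by rw [← hbeq, ← h]; simp
      rw [← this]; exact hfb
  -- express w and q using a, b, u
  have hw' : w = s⁻¹ • a + (1 - s⁻¹) • u := by
    have h1 : s • w = a - (1 - s) • u := by rw [← haeq]; abel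
    calc w = s⁻¹ • (s • w) := by rw [smul_smul, inv_mul_cancel₀ hs0.ne', one_smul]
      _ = s⁻¹ • (a - (1 - s) • u) := by rw [h1]
      _ = s⁻¹ • a + (1 - s⁻¹) • u := by
          match_scalars <;> field_simp <;> ring
  have hq' : q = t⁻¹ • b + (1 - t⁻¹) • u := by
    have h1 : t • q = b - (1 - t) • u := by rw [← hbeq]; abel
    calc q = t⁻¹ • (t • q) := by rw [smul_smul, inv_mul_cancel₀ ht0.ne', one_smul]
      _ = t⁻¹ • (b - (1 - t) • u) := by rw [h1]
      _ = t⁻¹ • b + (1 - t⁻¹) • u := by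
          match_scalars <;> field_simp <;> ring
  -- decompose x
  have hxhull' := hxhull
  rw [show ({u, w, q} : Set (ℝ × ℝ)) = insert u {w, q} from rfl,
    convexHull_insert ⟨w, by simp⟩, mem_convexJoin] at hxhull'
  obtain ⟨u', hu', z, hz, hxz⟩ := hxhull'
  rw [Set.mem_singleton_iff] at hu'
  rw [hu'] at hxz
  rw [convexHull_pair] at hz
  obtain ⟨r1, r2, hr1, hr2, hrsum, hzeq⟩ := hz
  obtain ⟨p1, p2, hp1, hp2, hpsum, hxeq⟩ := hxz
  obtain rfl : p1 = 1 - p2 := by linarith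
  obtain rfl : r1 = 1 - r2 := by linarith
  -- the convex combination
  have hcomb : x = (1 - p2 * (1 - r2) * s⁻¹ - p2 * r2 * t⁻¹) • u
      + (p2 * (1 - r2) * s⁻¹) • a + (p2 * r2 * t⁻¹) • b := by
    rw [← hxeq, ← hzeq, hw', hq']
    module
  have hca : (0:ℝ) ≤ p2 * (1 - r2) * s⁻¹ := by
    have : (0:ℝ) ≤ 1 - r2 := by linarith
    positivity
  have hcb : (0:ℝ) ≤ p2 * r2 * t⁻¹ := by positivity
  -- value of the linear form at x
  have hfx_eq : A * x.1 + B * x.2 - C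
      = (1 - p2 * (1 - r2) * s⁻¹ - p2 * r2 * t⁻¹) * (A * u.1 + B * u.2 - C) := by
    have h := congrArg (fun p : ℝ × ℝ => A * p.1 + B * p.2) hcomb
    simp only [Prod.fst_add, Prod.snd_add, Prod.smul_fst, Prod.smul_snd,
      smul_eq_mul] at h
    linear_combination h + (p2 * (1 - r2) * s⁻¹) * hfa + (p2 * r2 * t⁻¹) * hfb
  have hcu : (0:ℝ) ≤ 1 - p2 * (1 - r2) * s⁻¹ - p2 * r2 * t⁻¹ := by
    by_contra hcu
    push_neg at hcu
    have h2 : 0 < (1 - p2 * (1 - r2) * s⁻¹ - p2 * r2 * t⁻¹)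
        * (A * u.1 + B * u.2 - C) ^ 2 := by
      calc (0:ℝ) < (A * x.1 + B * x.2 - C) * (A * u.1 + B * u.2 - C) := hsame
        _ = (1 - p2 * (1 - r2) * s⁻¹ - p2 * r2 * t⁻¹)
            * (A * u.1 + B * u.2 - C) ^ 2 := by rw [hfx_eq]; ring
    nlinarith [h2, sq_nonneg (A * u.1 + B * u.2 - C)]
  -- conclude
  have hmem := (convex_convexHull ℝ ({u, a, b} : Set (ℝ × ℝ))).sum_mem
    (t := (Finset.univ : Finset (Fin 3)))
    (w := ![1 - p2 * (1 - r2) * s⁻¹ - p2 * r2 * t⁻¹, p2 * (1 - r2) * s⁻¹, p2 * r2 * t⁻¹])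
    (z := ![u, a, b])
    (fun i _ => by
      fin_cases i
      · simpa using hcu
      · simpa using hca
      · simpa using hcb)
    (by simp [Fin.sum_univ_three]; ring)
    (fun i _ => by
      fin_cases i
      · exact subset_convexHull ℝ _ (by simp)
      · exact subset_convexHull ℝ _ (by simp)
      · exact subset_convexHull ℝ _ (by simp))
  simpa [Fin.sum_univ_three, ← hcomb] using hmem
end

section
/- Suppose f: (0,1] → ℝ≥0 is non-increasing, f(ε) = O(1) for ε ≥ ε̃ (a fixed constant), and satisfies f(ε) ≤ C·(ε^{-η}·f(ε^{1-β}) + ε^{-3/2-η}) for all ε < ε̃, where 0 < η < β/10 and 0 < β < 1/10 are constants. Then f(ε) = O(ε^{-3/2-γ}) for a constant γ > 0 depending only on η and β. -/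
open scoped Classical

/-- abstract form of the final recurrence
`Eq:RecurrenceComplete`.  If `f : (0,1] → ℝ≥0` is non-increasing, bounded on
`[ε̃,1]`, and satisfies `f(ε) ≤ C·(ε^{-η}·f(ε^{1-β}) + ε^{-3/2-η})` for all
`ε < ε̃`, where `0 < η < β/10` and `0 < β < 1/10`, then
`f(ε) = O(ε^{-3/2-γ})` for some constant `γ > 0` depending only on `η, β`. -/
theorem stmt15
    (f : ℝ → ℝ) (C η β εt : ℝ)
    (hC : 0 < C) (hη : 0 < η) (hηβ : η < β / 10)
    (hβ : 0 < β) (hβ1 : β < 1 / 10)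
    (hεt : 0 < εt) (hεt1 : εt < 1)
    (hnonneg : ∀ ε : ℝ, 0 < ε → ε ≤ 1 → 0 ≤ f ε)
    (hmono : ∀ ε ε' : ℝ, 0 < ε → ε ≤ ε' → ε' ≤ 1 → f ε' ≤ f ε)
    (hbase : ∃ M : ℝ, ∀ ε : ℝ, εt ≤ ε → ε ≤ 1 → f ε ≤ M)
    (hrec : ∀ ε : ℝ, 0 < ε → ε < εt →
      f ε ≤ C * (ε ^ (-η) * f (ε ^ (1 - β)) + ε ^ (-(3 / 2 : ℝ) - η))) :
    ∃ γ : ℝ, 0 < γ ∧ ∃ D : ℝ, 0 < D ∧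
      ∀ ε : ℝ, 0 < ε → ε ≤ 1 → f ε ≤ D * ε ^ (-(3 / 2 : ℝ) - γ) := by
  -- choose γ = 2η and the "gain" exponent a > 0
  obtain ⟨γ, hγdef⟩ : ∃ γ : ℝ, γ = 2 * η := ⟨_, rfl⟩
  have hγ : 0 < γ := by rw [hγdef]; positivity
  obtain ⟨a, hadef⟩ : ∃ a : ℝ, a = β * (3 / 2 + γ) - η := ⟨_, rfl⟩
  have ha : 0 < a := by
    have h1 : a = 3/2*β + 2*(β*η) - η := by rw [hadef, hγdef]; ring
    nlinarith [mul_pos hβ hη]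
  have h2C : (0:ℝ) < 2 * C := by linarith
  -- threshold ε₀
  obtain ⟨ε₀, hε₀def⟩ : ∃ x : ℝ, x = min (εt / 2) ((2 * C) ^ (-1 / a)) := ⟨_, rfl⟩
  have hε₀pos : 0 < ε₀ := by
    rw [hε₀def]
    exact lt_min (by linarith) (Real.rpow_pos_of_pos h2C _)
  have hε₀lt : ε₀ < εt := by
    rw [hε₀def]; exact lt_of_le_of_lt (min_le_left _ _) (by linarith)
  have hε₀le1 : ε₀ ≤ 1 := le_of_lt (lt_trans hε₀lt hεt1)
  -- key smallness: C * ε₀ ^ a ≤ 1/2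
  have hsmall : C * ε₀ ^ a ≤ 1 / 2 := by
    have h1 : ε₀ ^ a ≤ ((2 * C) ^ (-1 / a)) ^ a := by
      apply Real.rpow_le_rpow (le_of_lt hε₀pos) _ (le_of_lt ha)
      rw [hε₀def]; exact min_le_right _ _
    have h2 : ((2 * C) ^ (-1 / a)) ^ a = (2 * C) ^ (-1 : ℝ) := by
      rw [← Real.rpow_mul (le_of_lt h2C), div_mul_cancel₀ _ (ne_of_gt ha)]
    have h3 : (2 * C) ^ (-1 : ℝ) = 1 / (2 * C) := by
      rw [Real.rpow_neg_one]; ring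
    calc C * ε₀ ^ a ≤ C * (1 / (2 * C)) := by
          apply mul_le_mul_of_nonneg_left _ hC.le
          rw [← h3, ← h2]; exact h1
      _ = 1 / 2 := by field_simp
  -- the constant D
  obtain ⟨D, hDdef⟩ : ∃ D : ℝ, D = max (f ε₀) (2 * C) := ⟨_, rfl⟩
  have hDpos : 0 < D := by
    rw [hDdef]; exact lt_of_lt_of_le h2C (le_max_right _ _)
  have hD2C : 2 * C ≤ D := by rw [hDdef]; exact le_max_right _ _
  have hDf : f ε₀ ≤ D := by rw [hDdef]; exact le_max_left _ _
  -- ε^{-3/2-γ} ≥ 1 on (0,1]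
  have hone : ∀ ε : ℝ, 0 < ε → ε ≤ 1 → (1:ℝ) ≤ ε ^ (-(3 / 2 : ℝ) - γ) := by
    intro ε hε hε1
    have := Real.rpow_le_rpow_of_exponent_ge hε hε1 (show -(3/2:ℝ) - γ ≤ 0 by linarith)
    simpa using this
  have h1β : 0 < 1 - β := by linarith
  -- the core induction on the number of iterations of ε ↦ ε^{1-β}
  have key : ∀ n : ℕ, ∀ ε : ℝ, 0 < ε → ε ≤ 1 → ε₀ ≤ ε ^ ((1 - β) ^ n) →
      f ε ≤ D * ε ^ (-(3 / 2 : ℝ) - γ) := by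
    intro n
    induction n with
    | zero =>
      intro ε hε hε1 hn
      rw [pow_zero, Real.rpow_one] at hn
      have h1 : f ε ≤ f ε₀ := hmono ε₀ ε hε₀pos hn hε1
      calc f ε ≤ D := le_trans h1 hDf
        _ = D * 1 := by ring
        _ ≤ D * ε ^ (-(3 / 2 : ℝ) - γ) :=
          mul_le_mul_of_nonneg_left (hone ε hε hε1) hDpos.le
    | succ n ih =>
      intro ε hε hε1 hn
      by_cases hcase : ε₀ ≤ ε
      · have h1 : f ε ≤ f ε₀ := hmono ε₀ ε hε₀pos hcase hε1
        calc f ε ≤ D := le_trans h1 hDf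
          _ = D * 1 := by ring
          _ ≤ D * ε ^ (-(3 / 2 : ℝ) - γ) :=
            mul_le_mul_of_nonneg_left (hone ε hε hε1) hDpos.le
      push_neg at hcase
      have hεlt : ε < εt := lt_trans hcase hε₀lt
      -- the recursion applies
      have hrec' := hrec ε hε hεlt
      -- apply IH to ε' = ε^{1-β}
      have hε' : 0 < ε ^ (1 - β) := Real.rpow_pos_of_pos hε _
      have hε'1 : ε ^ (1 - β) ≤ 1 := Real.rpow_le_one hε.le hε1 h1β.le
      have hiter : (ε ^ (1 - β)) ^ ((1 - β) ^ n) = ε ^ ((1 - β) ^ (n + 1)) := by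
        rw [← Real.rpow_mul hε.le]
        congr 1
        rw [pow_succ]; ring
      have hIH := ih (ε ^ (1 - β)) hε' hε'1 (by rw [hiter]; exact hn)
      have hEpos : 0 < ε ^ (-(3 / 2 : ℝ) - γ) := Real.rpow_pos_of_pos hε _
      have he1 : ε ^ (-η) * (ε ^ (1 - β)) ^ (-(3 / 2 : ℝ) - γ)
          = ε ^ a * ε ^ (-(3 / 2 : ℝ) - γ) := by
        rw [← Real.rpow_mul hε.le, ← Real.rpow_add hε, ← Real.rpow_add hε]
        congr 1
        rw [hadef]; ring
      have he2 : ε ^ (-(3 / 2 : ℝ) - η) = ε ^ (γ - η) * ε ^ (-(3 / 2 : ℝ) - γ) := by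
        rw [← Real.rpow_add hε]
        congr 1; ring
      have hea : C * ε ^ a ≤ 1 / 2 :=
        le_trans (mul_le_mul_of_nonneg_left
          (Real.rpow_le_rpow hε.le hcase.le ha.le) hC.le) hsmall
      have heb : C * ε ^ (γ - η) ≤ 1 / 2 * D := by
        have h1 : ε ^ (γ - η) ≤ 1 :=
          Real.rpow_le_one hε.le hε1 (by rw [hγdef]; linarith)
        have h2 : C * ε ^ (γ - η) ≤ C * 1 := mul_le_mul_of_nonneg_left h1 hC.le
        linarith
      calc f ε ≤ C * (ε ^ (-η) * f (ε ^ (1 - β)) + ε ^ (-(3 / 2 : ℝ) - η)) := hrec'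
        _ ≤ C * (ε ^ (-η) * (D * (ε ^ (1 - β)) ^ (-(3 / 2 : ℝ) - γ))
              + ε ^ (-(3 / 2 : ℝ) - η)) := by
            apply mul_le_mul_of_nonneg_left _ hC.le
            apply add_le_add _ le_rfl
            exact mul_le_mul_of_nonneg_left hIH (Real.rpow_nonneg hε.le _)
        _ = (C * ε ^ a) * D * ε ^ (-(3 / 2 : ℝ) - γ)
              + (C * ε ^ (γ - η)) * ε ^ (-(3 / 2 : ℝ) - γ) := by
            rw [he2, show ε ^ (-η) * (D * (ε ^ (1 - β)) ^ (-(3 / 2 : ℝ) - γ))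
              = D * (ε ^ (-η) * (ε ^ (1 - β)) ^ (-(3 / 2 : ℝ) - γ)) from by ring, he1]
            ring
        _ ≤ (1 / 2) * D * ε ^ (-(3 / 2 : ℝ) - γ)
              + (1 / 2 * D) * ε ^ (-(3 / 2 : ℝ) - γ) := by
            apply add_le_add
            · exact mul_le_mul_of_nonneg_right
                (mul_le_mul_of_nonneg_right hea hDpos.le) hEpos.le
            · exact mul_le_mul_of_nonneg_right heb hEpos.le
        _ = D * ε ^ (-(3 / 2 : ℝ) - γ) := by ring
  -- conclusion: every ε eventually escapes (0, ε₀) under iteration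
  refine ⟨γ, hγ, D, hDpos, ?_⟩
  intro ε hε hε1
  have h0 : Filter.Tendsto (fun n : ℕ => (1 - β) ^ n) Filter.atTop (nhds 0) :=
    tendsto_pow_atTop_nhds_zero_of_lt_one (by linarith) (by linarith)
  have h1 : Filter.Tendsto (fun n : ℕ => Real.log ε * (1 - β) ^ n)
      Filter.atTop (nhds 0) := by
    simpa using h0.const_mul (Real.log ε)
  have h2 : Filter.Tendsto (fun n : ℕ => Real.exp (Real.log ε * (1 - β) ^ n))
      Filter.atTop (nhds 1) := by
    have := (Real.continuous_exp.tendsto 0).comp h1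
    simpa [Function.comp_def] using this
  have ht : Filter.Tendsto (fun n : ℕ => ε ^ ((1 - β) ^ n))
      Filter.atTop (nhds 1) := by
    simpa [Real.rpow_def_of_pos hε] using h2
  have hev := ht.eventually (eventually_ge_nhds (lt_trans hε₀lt hεt1))
  obtain ⟨n, hn⟩ := hev.exists
  exact key n ε hε hε1 hn
end
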